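/- Assume α > λ+δ and let V be a standard value-function candidate. Then every point of A ∩ (−p/α, 0) is an isolated point of A: for each x ∈ A ∩ (−p/α, 0) there exists h > 0 such that A ∩ (x−h, x+h) = {x}. -/

import Mathlib

open MeasureTheory Set Filter

noncomputable section

/-- Drift coefficient: c(x) = p + r x for x ≥ 0, c(x) = p + α x for x < 0. -/
def drift (p r a x : ℝ) : ℝ := if 0 ≤ x then p + r * x else p + a * x

/-- I_v(x) = ∫_{(0, x+p/α]} v(x−u) dμ(u). -/
def Iop (p a : ℝ) (mu : Measure ℝ) (v : ℝ → ℝ) (x : ℝ) : ℝ :=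
  ∫ u in Set.Ioc (0 : ℝ) (x + p / a), v (x - u) ∂mu

/-- L_{v,φ}(x) = c(x)·φ′(x) − (λ+δ)·v(x) + λ·I_v(x). -/
def Lphi (p lam d r a : ℝ) (mu : Measure ℝ) (v phi : ℝ → ℝ) (x : ℝ) : ℝ :=
  drift p r a x * deriv phi x - (lam + d) * v x + lam * Iop p a mu v x

/-- G_v(x) = c(x) − (λ+δ)·v(x) + λ·I_v(x). -/
def Gop (p lam d r a : ℝ) (mu : Measure ℝ) (v : ℝ → ℝ) (x : ℝ) : ℝ :=
  drift p r a x - (lam + d) * v x + lam * Iop p a mu v x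

/-- Viscosity sub-solution of the HJB equation on J ⊆ (−p/α,∞). -/
def IsViscSubsol (p lam d r a : ℝ) (mu : Measure ℝ) (u : ℝ → ℝ) (J : Set ℝ) : Prop :=
  ∀ x ∈ J, ∀ phi : ℝ → ℝ, ContDiff ℝ 1 phi → phi x = u x →
    (∀ y ∈ Set.Ici (-(p / a)), u y - phi y ≤ u x - phi x) →
    0 ≤ max (1 - deriv phi x) (Lphi p lam d r a mu u phi x)

/-- Viscosity super-solution of the HJB equation on J ⊆ (−p/α,∞). -/
def IsViscSupersol (p lam d r a : ℝ) (mu : Measure ℝ) (u : ℝ → ℝ) (J : Set ℝ) : Prop :=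
  ∀ x ∈ J, ∀ phi : ℝ → ℝ, ContDiff ℝ 1 phi → phi x = u x →
    (∀ y ∈ Set.Ici (-(p / a)), u x - phi x ≤ u y - phi y) →
    max (1 - deriv phi x) (Lphi p lam d r a mu u phi x) ≤ 0

/-- Viscosity solution: both sub- and super-solution. -/
def IsViscSol (p lam d r a : ℝ) (mu : Measure ℝ) (u : ℝ → ℝ) (J : Set ℝ) : Prop :=
  IsViscSubsol p lam d r a mu u J ∧ IsViscSupersol p lam d r a mu u J

/-- Locally Lipschitz on a set. -/
def LocLipOn (s : Set ℝ) (u : ℝ → ℝ) : Prop :=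
  ∀ x ∈ s, ∃ K : NNReal, ∃ eps : ℝ, 0 < eps ∧ LipschitzOnWith K u (s ∩ Metric.ball x eps)

/-- Linear growth bound on [−p/α,∞). -/
def LinGrowth (p a : ℝ) (u : ℝ → ℝ) : Prop :=
  ∃ c₁ c₂ : ℝ, ∀ x : ℝ, -(p / a) ≤ x → u x ≤ c₁ * x + c₂

/-- Standard value-function candidate. -/
structure IsCandidate (p lam d r a : ℝ) (mu : Measure ℝ) (V : ℝ → ℝ) : Prop where
  cont : ContinuousOn V (Set.Ici (-(p / a)))
  nonneg : ∀ x ∈ Set.Ici (-(p / a)), 0 ≤ V x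
  mono : MonotoneOn V (Set.Ici (-(p / a)))
  boundary : V (-(p / a)) = 0
  slope : ∀ x y : ℝ, -(p / a) ≤ x → x ≤ y → y - x ≤ V y - V x
  growth : ∀ x : ℝ, 0 ≤ x → V x ≤ (d * x + p) / (d - r) + p / a
  locLip : LocLipOn (Set.Ioi (-(p / a))) V
  visc : IsViscSol p lam d r a mu V (Set.Ioi (-(p / a)))
  derivLim : ∀ x ∈ Set.Ioi (-(p / a)), ∀ (h : ℕ → ℝ) (dd : ℝ),
      ((∀ n, 0 < h n) ∨ (∀ n, h n < 0)) →
      Filter.Tendsto h Filter.atTop (nhds 0) →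
      Filter.Tendsto (fun n => (V (x + h n) - V x) / h n) Filter.atTop (nhds dd) →
      1 ≤ dd ∧ dd * drift p r a x - (lam + d) * V x + lam * Iop p a mu V x ≤ 0

/-- The set A = {x ∈ [−p/α,∞) : G_V(x) = 0}. -/
def setA (p lam d r a : ℝ) (mu : Measure ℝ) (V : ℝ → ℝ) : Set ℝ :=
  {x | x ∈ Set.Ici (-(p / a)) ∧ Gop p lam d r a mu V x = 0}

/-- The set B = {x ∈ [−p/α,∞) : V′(x) exists, V′(x) = 1 and G_V(x) < 0}. -/
def setB (p lam d r a : ℝ) (mu : Measure ℝ) (V : ℝ → ℝ) : Set ℝ :=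
  {x | x ∈ Set.Ici (-(p / a)) ∧ DifferentiableAt ℝ V x ∧ deriv V x = 1 ∧
      Gop p lam d r a mu V x < 0}

/-- The set C = [−p/α,∞) \ (A ∪ B). -/
def setC (p lam d r a : ℝ) (mu : Measure ℝ) (V : ℝ → ℝ) : Set ℝ :=
  Set.Ici (-(p / a)) \ (setA p lam d r a mu V ∪ setB p lam d r a mu V)

lemma aux_intOn (p lam d r a : ℝ) (mu : Measure ℝ) [IsProbabilityMeasure mu]
    (V : ℝ → ℝ) (hV : IsCandidate p lam d r a mu V) (z : ℝ) (hz : -(p / a) ≤ z) :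
    MeasureTheory.IntegrableOn (fun u => V (z - u)) (Set.Ioc 0 (z + p / a)) mu := by
  have hc : ContinuousOn (fun u => V (z - u)) (Set.Icc 0 (z + p / a)) := by
    apply hV.cont.comp ((continuous_const.sub continuous_id).continuousOn)
    intro u hu
    simp only [Set.mem_Ici, id_eq]
    simp only [Set.mem_Icc] at hu
    simp only [Pi.sub_apply, id_eq]
    linarith [hu.2]
  exact (hc.integrableOn_compact isCompact_Icc).mono_set Set.Ioc_subset_Icc_self

lemma aux_Imono (p lam d r a : ℝ) (mu : Measure ℝ) [IsProbabilityMeasure mu]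
    (V : ℝ → ℝ) (hV : IsCandidate p lam d r a mu V) {u v : ℝ}
    (hu : -(p / a) ≤ u) (huv : u ≤ v) :
    Iop p a mu V u ≤ Iop p a mu V v := by
  have hv : -(p / a) ≤ v := le_trans hu huv
  have h1 : MeasureTheory.IntegrableOn (fun t => V (v - t)) (Set.Ioc 0 (v + p / a)) mu :=
    aux_intOn p lam d r a mu V hV v hv
  have h1' : MeasureTheory.IntegrableOn (fun t => V (v - t)) (Set.Ioc 0 (u + p / a)) mu :=
    h1.mono_set (Set.Ioc_subset_Ioc_right (by linarith))
  have h0 : MeasureTheory.IntegrableOn (fun t => V (u - t)) (Set.Ioc 0 (u + p / a)) mu :=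
    aux_intOn p lam d r a mu V hV u hu
  have step1 : ∫ t in Set.Ioc 0 (u + p / a), V (u - t) ∂mu
      ≤ ∫ t in Set.Ioc 0 (u + p / a), V (v - t) ∂mu := by
    apply MeasureTheory.setIntegral_mono_on h0 h1' measurableSet_Ioc
    intro t ht
    simp only [Set.mem_Ioc] at ht
    exact hV.mono (by simp only [Set.mem_Ici]; linarith [ht.2])
      (by simp only [Set.mem_Ici]; linarith [ht.2]) (by linarith)
  have step2 : ∫ t in Set.Ioc 0 (u + p / a), V (v - t) ∂mu
      ≤ ∫ t in Set.Ioc 0 (v + p / a), V (v - t) ∂mu := by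
    apply MeasureTheory.setIntegral_mono_set h1
    · filter_upwards [MeasureTheory.ae_restrict_mem measurableSet_Ioc] with t ht
      simp only [Set.mem_Ioc] at ht
      exact hV.nonneg _ (by simp only [Set.mem_Ici]; linarith [ht.2])
    · exact HasSubset.Subset.eventuallyLE (Set.Ioc_subset_Ioc_right (by linarith))
  simpa [Iop] using step1.trans step2

/-- Key growth inequality on A ∩ (−p/α, 0). -/
lemma aux_growA (p lam d r a : ℝ) (hlam : 0 < lam) (hd : 0 < d)
    (mu : Measure ℝ) [IsProbabilityMeasure mu]
    (V : ℝ → ℝ) (hV : IsCandidate p lam d r a mu V) {u v : ℝ}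
    (hu : u ∈ setA p lam d r a mu V) (hv : v ∈ setA p lam d r a mu V)
    (huv : u < v) (hv0 : v < 0) :
    (a / (lam + d)) * (v - u) ≤ V v - V u := by
  obtain ⟨huI, huG⟩ := hu
  obtain ⟨hvI, hvG⟩ := hv
  simp only [Set.mem_Ici] at huI hvI
  have hIm : Iop p a mu V u ≤ Iop p a mu V v :=
    aux_Imono p lam d r a mu V hV huI huv.le
  have hu0 : u < 0 := lt_trans huv hv0
  rw [Gop, drift, if_neg (not_le.2 hu0)] at huG
  rw [Gop, drift, if_neg (not_le.2 hv0)] at hvG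
  have hld : 0 < lam + d := by linarith
  rw [div_mul_eq_mul_div, div_le_iff₀ hld]
  nlinarith [mul_le_mul_of_nonneg_left hIm hlam.le]

theorem stmt10
    (p lam d r a : ℝ) (hp : 0 < p) (hlam : 0 < lam) (hd : 0 < d)
    (hr : 0 < r) (hra : r < a) (hrd : r < d)
    (mu : Measure ℝ) [IsProbabilityMeasure mu] (hmu : mu (Set.Iic 0) = 0)
    (hald : lam + d < a)
    (V : ℝ → ℝ) (hV : IsCandidate p lam d r a mu V) :
    ∀ x ∈ setA p lam d r a mu V ∩ Set.Ioo (-(p / a)) 0,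
      ∃ h : ℝ, 0 < h ∧
        setA p lam d r a mu V ∩ Set.Ioo (x - h) (x + h) = {x} := by
  intro x hx
  obtain ⟨hxA, hxIoo⟩ := hx
  obtain ⟨hxIci, hxG⟩ := hxA
  have hxgt : -(p / a) < x := hxIoo.1
  have hxlt : x < 0 := hxIoo.2
  obtain ⟨K, eps, heps, hLip⟩ := hV.locLip x hxgt
  set ρ : ℝ := a / (lam + d) with hρdef
  have hld : (0:ℝ) < lam + d := by linarith
  have hρ : 1 < ρ := (one_lt_div hld).2 hald
  by_contra hcon
  push_neg at hcon
  -- extraction of nearby points of A distinct from x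
  have key : ∀ ε : ℝ, 0 < ε → ∃ y, y ∈ setA p lam d r a mu V ∧ y ≠ x ∧ |y - x| < ε := by
    intro ε hε
    have hxmem : x ∈ setA p lam d r a mu V ∩ Set.Ioo (x - ε) (x + ε) :=
      ⟨⟨hxIci, hxG⟩, by constructor <;> linarith⟩
    have hss : {x} ⊂ setA p lam d r a mu V ∩ Set.Ioo (x - ε) (x + ε) :=
      (Set.singleton_subset_iff.2 hxmem).ssubset_of_ne (Ne.symm (hcon ε hε))
    obtain ⟨y, hyS, hynot⟩ := Set.exists_of_ssubset hss
    refine ⟨y, hyS.1, by simpa using hynot, ?_⟩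
    have := hyS.2
    rw [abs_sub_lt_iff]
    constructor <;> [linarith [this.2]; linarith [this.1]]
  set ε0 : ℝ := min eps (min ((x - -(p / a)) / 2) ((0 - x) / 2)) with hε0def
  have hε0pos : 0 < ε0 := by
    apply lt_min heps
    apply lt_min <;> linarith
  have hε0a : ε0 ≤ eps := min_le_left _ _
  have hε0b : ε0 ≤ (x - -(p / a)) / 2 := (min_le_right _ _).trans (min_le_left _ _)
  have hε0c : ε0 ≤ (0 - x) / 2 := (min_le_right _ _).trans (min_le_right _ _)
  -- choose sequence
  have hseq : ∀ n : ℕ, ∃ y, y ∈ setA p lam d r a mu V ∧ y ≠ x ∧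
      |y - x| < min ε0 (1 / (n + 1)) := by
    intro n
    apply key
    apply lt_min hε0pos
    positivity
  choose y hyA hyne hyd using hseq
  -- basic bounds on y n
  have hyball : ∀ n, |y n - x| < ε0 := fun n => (hyd n).trans_le (min_le_left _ _)
  have hysmall : ∀ n, |y n - x| < 1 / (n + 1) := fun n =>
    (hyd n).trans_le (min_le_right _ _)
  have hygt : ∀ n, -(p / a) < y n := by
    intro n
    have := abs_lt.1 (hyball n)
    linarith [this.1]
  have hylt : ∀ n, y n < 0 := by
    intro n
    have := abs_lt.1 (hyball n)
    linarith [this.2]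
  -- quotient bounds
  have hxmemL : x ∈ Set.Ioi (-(p / a)) ∩ Metric.ball x eps :=
    ⟨hxgt, Metric.mem_ball_self heps⟩
  have hymemL : ∀ n, y n ∈ Set.Ioi (-(p / a)) ∩ Metric.ball x eps := by
    intro n
    refine ⟨hygt n, ?_⟩
    rw [Metric.mem_ball, Real.dist_eq]
    exact (hyball n).trans_le hε0a
  have hqub : ∀ n, (V (y n) - V x) / (y n - x) ≤ K := by
    intro n
    have hdist := hLip.dist_le_mul _ (hymemL n) _ hxmemL
    rw [Real.dist_eq, Real.dist_eq] at hdist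
    have hne : y n - x ≠ 0 := sub_ne_zero.2 (hyne n)
    calc (V (y n) - V x) / (y n - x) ≤ |(V (y n) - V x) / (y n - x)| := le_abs_self _
      _ = |V (y n) - V x| / |y n - x| := abs_div _ _
      _ ≤ (K * |y n - x|) / |y n - x| := by
          gcongr
      _ = K := by
          rw [mul_div_assoc, div_self (abs_ne_zero.2 hne), mul_one]
  have hqlb : ∀ n, ρ ≤ (V (y n) - V x) / (y n - x) := by
    intro n
    rcases (hyne n).lt_or_gt with hlt | hgt
    · -- y n < x
      have hgrow := aux_growA p lam d r a hlam hd mu V hV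
        ⟨Set.mem_Ici.2 (hygt n).le, (hyA n).2⟩ ⟨hxIci, hxG⟩ hlt hxlt
      have h1 : (V (y n) - V x) / (y n - x) = (V x - V (y n)) / (x - y n) := by
        rw [← neg_div_neg_eq]
        ring_nf
      rw [h1, le_div_iff₀ (by linarith)]
      linarith
    · -- x < y n
      have hgrow := aux_growA p lam d r a hlam hd mu V hV
        ⟨hxIci, hxG⟩ ⟨Set.mem_Ici.2 (hygt n).le, (hyA n).2⟩ hgt (hylt n)
      rw [le_div_iff₀ (by linarith)]
      linarith
  -- pick a one-sided subsequence
  have hside : (∃ᶠ n in atTop, x < y n) ∨ (∃ᶠ n in atTop, y n < x) := by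
    by_contra hc
    rw [not_or] at hc
    rw [not_frequently] at hc
    obtain ⟨h1, h2⟩ := hc
    rw [not_frequently] at h2
    obtain ⟨n, hn1, hn2⟩ := (h1.and h2).exists
    rcases (hyne n).lt_or_gt with h | h
    · exact hn2 h
    · exact hn1 h
  have main : ∀ φ : ℕ → ℕ, StrictMono φ →
      ((∀ n, 0 < y (φ n) - x) ∨ (∀ n, y (φ n) - x < 0)) → False := by
    intro φ hφ hsign
    set h : ℕ → ℝ := fun n => y (φ n) - x with hhdef
    have hh0 : Tendsto h atTop (nhds 0) := by
      refine squeeze_zero_norm (fun n => ?_) tendsto_one_div_add_atTop_nhds_zero_nat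
      have h1 := hysmall (φ n)
      have h2 : (n : ℝ) ≤ (φ n : ℝ) := Nat.cast_le.mpr hφ.le_apply
      have hφn : (n : ℝ) + 1 ≤ (φ n : ℝ) + 1 := by linarith
      calc ‖h n‖ = |y (φ n) - x| := rfl
        _ ≤ 1 / ((φ n : ℝ) + 1) := h1.le
        _ ≤ 1 / ((n : ℝ) + 1) := one_div_le_one_div_of_le (by positivity) hφn
    set q : ℕ → ℝ := fun n => (V (x + h n) - V x) / h n with hqdef
    have hq_eq : ∀ n, q n = (V (y (φ n)) - V x) / (y (φ n) - x) := by
      intro n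
      simp only [hqdef, hhdef]
      ring_nf
    have hqmem : ∀ n, q n ∈ Set.Icc ρ (max ρ K) := by
      intro n
      rw [hq_eq n]
      exact ⟨hqlb (φ n), le_max_of_le_right (hqub (φ n))⟩
    obtain ⟨dd, hddmem, ψ, hψ, hψt⟩ :=
      tendsto_subseq_of_bounded (Metric.isBounded_Icc ρ (max ρ K)) hqmem
    rw [IsClosed.closure_eq isClosed_Icc] at hddmem
    have hdd_ge : ρ ≤ dd := hddmem.1
    have := hV.derivLim x hxgt (h ∘ ψ) dd ?side ?tend ?qt
    case side =>
      rcases hsign with hs | hs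
      · exact Or.inl fun n => hs (ψ n)
      · exact Or.inr fun n => hs (ψ n)
    case tend => exact hh0.comp hψ.tendsto_atTop
    case qt => exact hψt
    obtain ⟨hdd1, hdd2⟩ := this
    rw [drift, if_neg (not_le.2 hxlt)] at hdd2
    rw [Gop, drift, if_neg (not_le.2 hxlt)] at hxG
    have hcx : 0 < p + a * x := by
      have : a * (-(p / a)) < a * x := mul_lt_mul_of_pos_left hxgt (by linarith)
      rw [mul_neg, mul_div_cancel₀ _ (by linarith : a ≠ 0)] at this
      linarith
    nlinarith
  rcases hside with hf | hf
  · obtain ⟨φ, hφ, hφP⟩ := Filter.extraction_of_frequently_atTop hf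
    exact main φ hφ (Or.inl fun n => by linarith [hφP n])
  · obtain ⟨φ, hφ, hφP⟩ := Filter.extraction_of_frequently_atTop hf
    exact main φ hφ (Or.inr fun n => by linarith [hφP n])
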